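/- arXiv:1511.07466 — 2 statements merged into one kernel-verified Lean document; each statement's English description precedes it below -/
import Mathlib

section
/- Let V ⊆ ℂ((1/z)) be a subspace in the big cell of the Sato Grassmannian, i.e. the projection π : ℂ((1/z)) → ℂ[z] (taking the polynomial part) restricts to a ℂ-linear isomorphism V → ℂ[z]. If ∂_z V ⊆ V, then V = ℂ[z]. -/
open scoped BigOperators

noncomputable section

/-- Multiplication by `z^k` on `ℂ((1/z))`, in coefficient form. -/
def shiftOp (k : ℤ) : (ℤ → ℂ) →ₗ[ℂ] (ℤ → ℂ) where
  toFun f := fun n => f (n - k)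
  map_add' _ _ := rfl
  map_smul' _ _ := rfl

/-- Formal differentiation `∂_z` in coefficient form: `(∂_z f)_n = (n+1) f_{n+1}`. -/
def derivOp : (ℤ → ℂ) →ₗ[ℂ] (ℤ → ℂ) where
  toFun f := fun n => ((n + 1 : ℤ) : ℂ) * f (n + 1)
  map_add' f g := by funext n; simp [mul_add]
  map_smul' c f := by funext n; simp; ring

/-- The projection `π : ℂ((1/z)) → ℂ[z]` onto the polynomial part. -/
def polyPart : (ℤ → ℂ) →ₗ[ℂ] (ℤ → ℂ) where
  toFun f := fun n => if 0 ≤ n then f n else 0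
  map_add' f g := by funext n; by_cases h : 0 ≤ n <;> simp [h]
  map_smul' c f := by funext n; by_cases h : 0 ≤ n <;> simp [h]

/-- The ambient space `ℂ((1/z))`: coefficient functions with support bounded above. -/
def laurentAtInf : Submodule ℂ (ℤ → ℂ) where
  carrier := {f | ∃ N : ℤ, ∀ n, N < n → f n = 0}
  zero_mem' := ⟨0, fun _ _ => rfl⟩
  add_mem' := by
    rintro f g ⟨N, hN⟩ ⟨M, hM⟩
    refine ⟨max N M, fun n hn => ?_⟩
    have h1 := hN n (lt_of_le_of_lt (le_max_left _ _) hn)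
    have h2 := hM n (lt_of_le_of_lt (le_max_right _ _) hn)
    simp [Pi.add_apply, h1, h2]
  smul_mem' := by
    rintro c f ⟨N, hN⟩
    exact ⟨N, fun n hn => by simp [Pi.smul_apply, hN n hn]⟩

/-- The subspace `ℂ[z] ⊆ ℂ((1/z))` of polynomials. -/
def polySpace : Submodule ℂ (ℤ → ℂ) where
  carrier := {f | (∀ n < (0 : ℤ), f n = 0) ∧ ∃ N : ℤ, ∀ n, N < n → f n = 0}
  zero_mem' := ⟨fun _ _ => rfl, 0, fun _ _ => rfl⟩
  add_mem' := by
    rintro f g ⟨hf, N, hN⟩ ⟨hg, M, hM⟩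
    refine ⟨fun n hn => by simp [Pi.add_apply, hf n hn, hg n hn], max N M, fun n hn => ?_⟩
    have h1 := hN n (lt_of_le_of_lt (le_max_left _ _) hn)
    have h2 := hM n (lt_of_le_of_lt (le_max_right _ _) hn)
    simp [Pi.add_apply, h1, h2]
  smul_mem' := by
    rintro c f ⟨hf, N, hN⟩
    exact ⟨fun n hn => by simp [Pi.smul_apply, hf n hn],
      N, fun n hn => by simp [Pi.smul_apply, hN n hn]⟩

/-- `V` lies in the big cell of the Sato Grassmannian: `V ⊆ ℂ((1/z))` and the
polynomial-part projection restricts to a bijection `V → ℂ[z]`. -/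
def BigCell (V : Submodule ℂ (ℤ → ℂ)) : Prop :=
  V ≤ laurentAtInf ∧ (∀ v ∈ V, polyPart v = 0 → v = 0) ∧
    ∀ p ∈ polySpace, ∃ v ∈ V, polyPart v = p

/-- The constant Laurent series `1`. -/
def oneSeries : ℤ → ℂ := fun n => if n = 0 then 1 else 0

lemma derivOp_iterate (k : ℕ) (f : ℤ → ℂ) (n : ℤ) :
    (derivOp^[k] f) n = (∏ i ∈ Finset.range k, ((n + i + 1 : ℤ) : ℂ)) * f (n + k) := by
  induction k generalizing f n with
  | zero => simp
  | succ k ih =>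
    rw [Function.iterate_succ_apply, ih]
    have hd : (derivOp f) (n + k) = ((n + (k:ℤ) + 1 : ℤ) : ℂ) * f (n + k + 1) := rfl
    rw [hd, Finset.prod_range_succ]
    have hidx : n + (k:ℤ) + 1 = n + ((k:ℕ)+1 : ℕ) := by push_cast; ring
    rw [← hidx]
    ring

/-- if `V` is in the big cell and `∂_z V ⊆ V`, then `V = ℂ[z]`. -/
theorem bigCell_deriv_stable_eq_polySpace (V : Submodule ℂ (ℤ → ℂ))
    (hV : BigCell V) (hD : ∀ v ∈ V, derivOp v ∈ V) : V = polySpace := by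
  obtain ⟨hle, hinj, hsurj⟩ := hV
  have hmem : ∀ (k : ℕ) (v : ℤ → ℂ), v ∈ V → derivOp^[k] v ∈ V := by
    intro k
    induction k with
    | zero => intro v hv; exact hv
    | succ k ih => intro v hv; rw [Function.iterate_succ_apply]; exact ih _ (hD v hv)
  have hneg : ∀ v ∈ V, ∀ m : ℤ, m < 0 → v m = 0 := by
    intro v hv m hm
    by_contra hvm
    obtain ⟨N, hN⟩ := hle hv
    set k : ℕ := N.toNat + 1 with hk
    have hkN : N < (k : ℤ) := by
      have := Int.self_le_toNat N
      omega
    have hw : derivOp^[k] v ∈ V := hmem k v hv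
    have hpoly : polyPart (derivOp^[k] v) = 0 := by
      funext n
      simp only [polyPart, LinearMap.coe_mk, AddHom.coe_mk]
      by_cases h : 0 ≤ n
      · simp only [h, if_true, derivOp_iterate, hN (n + k) (by omega), mul_zero,
          Pi.zero_apply]
      · simp [h]
    have hzero := hinj _ hw hpoly
    have hz : (derivOp^[k] v) (m - k) = 0 := by rw [hzero]; rfl
    rw [derivOp_iterate] at hz
    have hsub : m - (k:ℤ) + k = m := by ring
    rw [hsub] at hz
    rcases mul_eq_zero.mp hz with h | h
    · obtain ⟨i, hi, h0⟩ := Finset.prod_eq_zero_iff.mp h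
      have hik : (i:ℤ) < k := by exact_mod_cast Finset.mem_range.mp hi
      have hne : (m - (k:ℤ) + i + 1 : ℤ) ≠ 0 := by omega
      exact hne (by exact_mod_cast h0)
    · exact hvm h
  ext f
  constructor
  · intro hf
    exact ⟨fun n hn => hneg f hf n hn, hle hf⟩
  · intro hf
    obtain ⟨v, hvV, hvp⟩ := hsurj f hf
    have hvf : v = f := by
      funext n
      by_cases h : 0 ≤ n
      · have := congrFun hvp n
        simpa [polyPart, h] using this
      · rw [hneg v hvV n (by omega), hf.1 n (by omega)]
    rwa [hvf] at hvV

end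
end

section
/- Let n ≥ 1 and let V₁, …, V_n be ℂ-subspaces of ℂ((1/z)), each in the big cell (the polynomial-part projection π restricts to an isomorphism V_i ≅ ℂ[z]), satisfying z V_i ⊆ V_{i+1} (indices mod n). Let φ_i ∈ V_i be the unique element with π(φ_i) = 1. Then for each i, V_i = span_ℂ{ z^k φ_{i−k mod n} : k ≥ 0 }. -/
open scoped BigOperators

noncomputable section

/-- for a `z`-cyclic chain `V₁, …, V_n` of big-cell points with
`z V_i ⊆ V_{i+1}` (indices mod `n`) and `φ_i ∈ V_i` the unique elements with polynomial
part `1`, each `V_i` is spanned by `{ z^k φ_{i-k mod n} : k ≥ 0 }`. -/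
theorem cyclic_quiver_span (n : ℕ) [NeZero n] (V : Fin n → Submodule ℂ (ℤ → ℂ))
    (hbig : ∀ i, BigCell (V i))
    (hcyc : ∀ i, ∀ v ∈ V i, shiftOp 1 v ∈ V (i + 1))
    (φ : Fin n → (ℤ → ℂ))
    (hφ : ∀ i, φ i ∈ V i ∧ polyPart (φ i) = oneSeries) :
    ∀ i, V i = Submodule.span ℂ
      {v : ℤ → ℂ | ∃ k : ℕ, v = shiftOp (k : ℤ) (φ (i - Fin.ofNat n k))} := by
  have hφ0 : ∀ j : Fin n, φ j 0 = 1 := by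
    intro j
    have := congrFun (hφ j).2 0
    simpa [polyPart, oneSeries] using this
  have hφpos : ∀ (j : Fin n) (m : ℤ), 0 < m → φ j m = 0 := by
    intro j m hm
    have := congrFun (hφ j).2 m
    simpa [polyPart, oneSeries, hm.le, hm.ne'] using this
  have hmem : ∀ (k : ℕ) (i : Fin n), shiftOp (k : ℤ) (φ (i - Fin.ofNat n k)) ∈ V i := by
    intro k
    induction k with
    | zero =>
      intro i
      have h0 : shiftOp ((0 : ℕ) : ℤ) (φ (i - Fin.ofNat n 0)) = φ i := by
        funext m
        simp [shiftOp]
      rw [h0]; exact (hφ i).1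
    | succ k ih =>
      intro i
      have h1 := ih (i - 1)
      have h2 := hcyc (i - 1) _ h1
      have e1 : (i - 1) + 1 = i := by open Fin.CommRing in ring
      rw [e1] at h2
      have e2 : shiftOp (1 : ℤ) (shiftOp ((k : ℕ) : ℤ) (φ (i - 1 - Fin.ofNat n k))) =
          shiftOp (((k + 1 : ℕ)) : ℤ) (φ (i - Fin.ofNat n (k + 1))) := by
        have hidx : i - 1 - Fin.ofNat n k = i - Fin.ofNat n (k + 1) := by
          open Fin.NatCast Fin.CommRing in (simp only [Fin.ofNat_eq_cast]; push_cast; ring)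
        rw [hidx]
        funext m
        show φ _ (m - 1 - (k : ℤ)) = φ _ (m - ((k + 1 : ℕ) : ℤ))
        congr 1; push_cast; ring
      rw [e2] at h2
      exact h2
  intro i
  apply le_antisymm
  · intro v hv
    obtain ⟨N, hN⟩ := (hbig i).1 hv
    have key : ∀ m : ℕ, ∀ v, v ∈ V i → (∀ t : ℤ, (m : ℤ) ≤ t → v t = 0) →
        v ∈ Submodule.span ℂ
          {v : ℤ → ℂ | ∃ k : ℕ, v = shiftOp (k : ℤ) (φ (i - Fin.ofNat n k))} := by
      intro m
      induction m with
      | zero =>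
        intro v hv hz
        have hp : polyPart v = 0 := by
          funext t
          by_cases h : (0 : ℤ) ≤ t
          · simp [polyPart, h, hz t h]
          · simp [polyPart, h]
        rw [(hbig i).2.1 v hv hp]; exact zero_mem _
      | succ m ih =>
        intro v hv hz
        set c := v (m : ℤ) with hc
        set e := shiftOp ((m : ℕ) : ℤ) (φ (i - Fin.ofNat n m)) with he
        have hew : e ∈ V i := hmem m i
        have hspan_e : e ∈ Submodule.span ℂ
            {v : ℤ → ℂ | ∃ k : ℕ, v = shiftOp (k : ℤ) (φ (i - Fin.ofNat n k))} :=
          Submodule.subset_span ⟨m, rfl⟩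
        have hw : v - c • e ∈ V i := Submodule.sub_mem _ hv (Submodule.smul_mem _ _ hew)
        have hwz : ∀ t : ℤ, (m : ℤ) ≤ t → (v - c • e) t = 0 := by
          intro t ht
          have heval : e t = φ (i - Fin.ofNat n m) (t - (m : ℤ)) := rfl
          rcases eq_or_lt_of_le ht with h | h
          · have het : e t = 1 := by rw [heval, ← h]; simpa using hφ0 _
            have hvt : v t = c := by rw [hc, h]
            simp [Pi.sub_apply, Pi.smul_apply, het, hvt]
          · have hvt : v t = 0 := hz t (by push_cast; omega)
            have het : e t = 0 := by rw [heval]; exact hφpos _ _ (by omega)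
            simp [Pi.sub_apply, Pi.smul_apply, het, hvt]
        have hws := ih (v - c • e) hw hwz
        have hvsum : v = (v - c • e) + c • e := by abel
        rw [hvsum]
        exact Submodule.add_mem _ hws (Submodule.smul_mem _ _ hspan_e)
    refine key (N + 1).toNat v hv ?_
    intro t ht
    exact hN t (by omega)
  · rw [Submodule.span_le]
    rintro w ⟨k, rfl⟩
    exact hmem k i

end
end
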